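/- Let F: U → ℝᵐ be a single-valued mapping, U ⊆ ℝⁿ open, x̄ ∈ U. (i) If F is strictly continuous at x̄ and gph D_*F(x̄) is a linear subspace, then dim gph D_*F(x̄) = n and D_*F(x̄) is a (single-valued) linear mapping from ℝⁿ to ℝᵐ. (ii) If F is strictly continuous at x̄ and gph D*F(x̄) is a linear subspace, then dim gph D*F(x̄) = m and D*F(x̄) is a (single-valued) linear mapping from ℝᵐ to ℝⁿ. (iii) If F is calm at x̄ and gph DF(x̄) is a linear subspace, then dim gph DF(x̄) = n and DF(x̄) is a (single-valued) linear mapping from ℝⁿ to ℝᵐ. -/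

import Mathlib

open Filter Topology Metric Set
open scoped RealInnerProductSpace NNReal ENNReal

noncomputable section

/-- Euclidean space `ℝⁿ`. -/
abbrev Euc (n : ℕ) : Type := EuclideanSpace ℝ (Fin n)

section NormedDefs

variable {X Y : Type*} [NormedAddCommGroup X] [NormedSpace ℝ X]
  [NormedAddCommGroup Y] [NormedSpace ℝ Y]

/-- The (Bouligand) tangent cone to `Ω` at `z`. -/
def tanCone (Ω : Set X) (z : X) : Set X :=
  {w | ∃ (t : ℕ → ℝ) (wk : ℕ → X), (∀ k, 0 < t k) ∧ Tendsto t atTop (𝓝 0) ∧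
      Tendsto wk atTop (𝓝 w) ∧ ∀ k, z + t k • wk k ∈ Ω}

/-- The regular (Clarke) tangent cone to `Ω` at `z`. -/
def clarkeCone (Ω : Set X) (z : X) : Set X :=
  {w | ∀ (zk : ℕ → X) (t : ℕ → ℝ), (∀ k, zk k ∈ Ω) → Tendsto zk atTop (𝓝 z) →
      (∀ k, 0 < t k) → Tendsto t atTop (𝓝 0) →
      ∃ wk : ℕ → X, Tendsto wk atTop (𝓝 w) ∧ ∀ k, zk k + t k • wk k ∈ Ω}

/-- The paratingent cone to `Ω` at `z`. -/
def paraCone (Ω : Set X) (z : X) : Set X :=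
  {w | ∃ (zk : ℕ → X) (t : ℕ → ℝ) (wk : ℕ → X), (∀ k, zk k ∈ Ω) ∧
      Tendsto zk atTop (𝓝 z) ∧ (∀ k, 0 < t k) ∧ Tendsto t atTop (𝓝 0) ∧
      Tendsto wk atTop (𝓝 w) ∧ ∀ k, zk k + t k • wk k ∈ Ω}

/-- `Ω` is strictly smooth at `z` if the Clarke tangent cone and the paratingent
cone coincide there. -/
def StrictlySmoothAt (Ω : Set X) (z : X) : Prop := clarkeCone Ω z = paraCone Ω z

/-- `Ω` is geometrically derivable at `z`. -/
def GeomDerivableAt (Ω : Set X) (z : X) : Prop :=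
  ∀ w ∈ tanCone Ω z, ∀ t : ℕ → ℝ, (∀ k, 0 < t k) → Tendsto t atTop (𝓝 0) →
    ∃ wk : ℕ → X, Tendsto wk atTop (𝓝 w) ∧ ∀ k, z + t k • wk k ∈ Ω

/-- `Ω` is locally closed at `z`. -/
def LocallyClosedAt (Ω : Set X) (z : X) : Prop :=
  ∃ V : Set X, V ∈ 𝓝 z ∧ IsClosed V ∧ IsClosed (Ω ∩ V)

/-- The set `s` is a linear subspace. -/
def IsLinearSubspace (s : Set X) : Prop := ∃ S : Submodule ℝ X, (S : Set X) = s

/-- The set `s` is a linear subspace of dimension `d`. -/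
def HasDim (s : Set X) (d : ℕ) : Prop :=
  ∃ S : Submodule ℝ X, (S : Set X) = s ∧ Module.finrank ℝ S = d

/-- The graph of a set-valued mapping. -/
def gphOf (Fm : X → Set Y) : Set (X × Y) := {p | p.2 ∈ Fm p.1}

/-- The graph of a single-valued mapping defined on `U`. -/
def gphOn (f : X → Y) (U : Set X) : Set (X × Y) := {p | p.1 ∈ U ∧ p.2 = f p.1}

/-- `f` (defined on `U`) is strictly continuous (locally Lipschitz) at `xb`. -/
def StrictlyContinuousAt' (f : X → Y) (U : Set X) (xb : X) : Prop :=
  ∃ U' ∈ 𝓝 xb, U' ⊆ U ∧ ∃ κ : ℝ, 0 ≤ κ ∧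
    ∀ x ∈ U', ∀ x' ∈ U', ‖f x - f x'‖ ≤ κ * ‖x - x'‖

/-- `f` (defined on `U`) is calm at `xb`. -/
def CalmAt' (f : X → Y) (U : Set X) (xb : X) : Prop :=
  ∃ U' ∈ 𝓝 xb, U' ⊆ U ∧ ∃ κ : ℝ, 0 ≤ κ ∧ ∀ x ∈ U', ‖f x - f xb‖ ≤ κ * ‖x - xb‖

/-- `f` (defined on `U`) is strictly differentiable at `xb`. -/
def StrictDiffOnAt (f : X → Y) (U : Set X) (xb : X) : Prop :=
  ∃ A : X →L[ℝ] Y, ∀ ε : ℝ, 0 < ε → ∃ δ > 0, ∀ x ∈ U, ∀ x' ∈ U,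
    ‖x - xb‖ < δ → ‖x' - xb‖ < δ → ‖f x' - f x - A (x' - x)‖ ≤ ε * ‖x' - x‖

/-- `f` (defined on `U`) is Fréchet differentiable at `xb`. -/
def FrechetDiffOnAt (f : X → Y) (U : Set X) (xb : X) : Prop :=
  ∃ A : X →L[ℝ] Y, ∀ ε : ℝ, 0 < ε → ∃ δ > 0, ∀ x ∈ U,
    ‖x - xb‖ < δ → ‖f x - f xb - A (x - xb)‖ ≤ ε * ‖x - xb‖

/-- The B-Jacobian (Bouligand limiting Jacobian) of `f` at `xb`. -/
def BJacobian (f : X → Y) (U : Set X) (xb : X) : Set (X →L[ℝ] Y) :=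
  {A | ∃ (xk : ℕ → X) (Ak : ℕ → X →L[ℝ] Y),
      (∀ k, xk k ∈ U ∧ HasFDerivAt f (Ak k) (xk k)) ∧
      Tendsto xk atTop (𝓝 xb) ∧ Tendsto Ak atTop (𝓝 A)}

/-- `Ω ⊆ X` is a Lipschitz manifold of dimension `d` (and codimension `c`) around `z`:
up to a `C¹` change of coordinates `Φ`, `Ω` locally coincides with the graph of a
Lipschitz mapping `f : U → ℝᶜ`, `U ⊆ ℝᵈ` open. -/
def IsLipschitzManifoldAt (Ω : Set X) (d c : ℕ) (z : X) : Prop :=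
  ∃ (W : Set X) (Φ : X → Euc d × Euc c) (Ψ : Euc d × Euc c → X)
    (U : Set (Euc d)) (f : Euc d → Euc c) (K : ℝ≥0),
    IsOpen W ∧ z ∈ W ∧ IsOpen (Φ '' W) ∧
    ContDiffOn ℝ 1 Φ W ∧ ContDiffOn ℝ 1 Ψ (Φ '' W) ∧
    (∀ x ∈ W, Ψ (Φ x) = x) ∧ (∀ y ∈ Φ '' W, Φ (Ψ y) = y) ∧
    IsOpen U ∧ LipschitzOnWith K f U ∧
    Φ '' (Ω ∩ W) = {p | p.1 ∈ U ∧ p.2 = f p.1}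

/-- As `IsLipschitzManifoldAt`, with the Lipschitz mapping `f` moreover strictly
differentiable at the transformed reference point. -/
def IsGraphStrictDiffAt (Ω : Set X) (d c : ℕ) (z : X) : Prop :=
  ∃ (W : Set X) (Φ : X → Euc d × Euc c) (Ψ : Euc d × Euc c → X)
    (U : Set (Euc d)) (f : Euc d → Euc c) (K : ℝ≥0),
    IsOpen W ∧ z ∈ W ∧ IsOpen (Φ '' W) ∧
    ContDiffOn ℝ 1 Φ W ∧ ContDiffOn ℝ 1 Ψ (Φ '' W) ∧
    (∀ x ∈ W, Ψ (Φ x) = x) ∧ (∀ y ∈ Φ '' W, Φ (Ψ y) = y) ∧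
    IsOpen U ∧ LipschitzOnWith K f U ∧
    Φ '' (Ω ∩ W) = {p | p.1 ∈ U ∧ p.2 = f p.1} ∧
    StrictDiffOnAt f U (Φ z).1

/-- Strong metric subregularity of a set-valued mapping at `(xb, yb)`. -/
def StronglySubregAt (Fm : X → Set Y) (xb : X) (yb : Y) : Prop :=
  ∃ κ : ℝ≥0, ∃ U ∈ 𝓝 xb, ∀ x ∈ U,
    (‖x - xb‖₊ : ℝ≥0∞) ≤ (κ : ℝ≥0∞) * EMetric.infEdist yb (Fm x)

/-- Metric regularity of a set-valued mapping around `(xb, yb)`. -/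
def MetricallyRegularAround (Fm : X → Set Y) (xb : X) (yb : Y) : Prop :=
  ∃ κ : ℝ≥0, ∃ U ∈ 𝓝 xb, ∃ V ∈ 𝓝 yb, ∀ x ∈ U, ∀ y ∈ V,
    EMetric.infEdist x {x' | y ∈ Fm x'} ≤ (κ : ℝ≥0∞) * EMetric.infEdist y (Fm x)

/-- Strong metric regularity of a set-valued mapping around `(xb, yb)`. -/
def StronglyRegularAround (Fm : X → Set Y) (xb : X) (yb : Y) : Prop :=
  MetricallyRegularAround Fm xb yb ∧
  ∃ (U' : Set X) (V' : Set Y) (h : Y → X), IsOpen U' ∧ IsOpen V' ∧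
    xb ∈ U' ∧ yb ∈ V' ∧ h yb = xb ∧
    gphOf Fm ∩ (U' ×ˢ V') = {p | p.2 ∈ V' ∧ p.1 = h p.2}

end NormedDefs

section InnerDefs

variable {E F : Type*} [NormedAddCommGroup E] [InnerProductSpace ℝ E]
  [NormedAddCommGroup F] [InnerProductSpace ℝ F]

/-- The regular (Fréchet) normal cone: the polar of the tangent cone. -/
def regNormal (Ω : Set E) (z : E) : Set E := {v | ∀ w ∈ tanCone Ω z, ⟪v, w⟫ ≤ 0}

/-- The limiting (Mordukhovich) normal cone. -/
def limNormal (Ω : Set E) (z : E) : Set E :=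
  {v | ∃ zk vk : ℕ → E, (∀ k, zk k ∈ Ω) ∧ Tendsto zk atTop (𝓝 z) ∧
      (∀ k, vk k ∈ regNormal Ω (zk k)) ∧ Tendsto vk atTop (𝓝 v)}

/-- `Ω` is normally regular at `z`. -/
def NormallyRegularAt (Ω : Set E) (z : E) : Prop := regNormal Ω z = limNormal Ω z

/-- The orthogonal complement (as a set) of a set. -/
def orthSet (s : Set E) : Set E := {v | ∀ w ∈ s, ⟪v, w⟫ = 0}

/-- `Ω` is semismooth* at `zb`. -/
def SemismoothStarAt (Ω : Set E) (zb : E) : Prop :=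
  ∀ ε : ℝ, 0 < ε → ∃ δ > 0, ∀ z ∈ Ω, ‖z - zb‖ < δ → ∀ v ∈ limNormal Ω z,
    |⟪v, z - zb⟫| ≤ ε * ‖z - zb‖ * ‖v‖

/-- The canonical inner product of the product of two inner product spaces. -/
def inner2 (p q : E × F) : ℝ := ⟪p.1, q.1⟫ + ⟪p.2, q.2⟫

/-- The regular normal cone for subsets of a product space. -/
def regNormal2 (Ω : Set (E × F)) (z : E × F) : Set (E × F) :=
  {v | ∀ w ∈ tanCone Ω z, inner2 v w ≤ 0}

/-- The limiting normal cone for subsets of a product space. -/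
def limNormal2 (Ω : Set (E × F)) (z : E × F) : Set (E × F) :=
  {v | ∃ zk vk : ℕ → E × F, (∀ k, zk k ∈ Ω) ∧ Tendsto zk atTop (𝓝 z) ∧
      (∀ k, vk k ∈ regNormal2 Ω (zk k)) ∧ Tendsto vk atTop (𝓝 v)}

/-- Normal regularity for subsets of a product space. -/
def NormallyRegular2At (Ω : Set (E × F)) (z : E × F) : Prop :=
  regNormal2 Ω z = limNormal2 Ω z

/-- Orthogonal complement (as a set) in a product space. -/
def orthSet2 (s : Set (E × F)) : Set (E × F) := {v | ∀ w ∈ s, inner2 v w = 0}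

/-- The graph of the limiting coderivative of a mapping with graph `Γ` at `z`:
`{(y*, x*) : (x*, -y*) ∈ N_Γ(z)}`. -/
def coderivGraph (Γ : Set (E × F)) (z : E × F) : Set (F × E) :=
  {q | (q.2, -q.1) ∈ limNormal2 Γ z}

/-- The semismooth* property for subsets of a product space (i.e. for mappings). -/
def SemismoothStar2At (Ω : Set (E × F)) (zb : E × F) : Prop :=
  ∀ ε : ℝ, 0 < ε → ∃ δ > 0, ∀ z ∈ Ω, ‖z - zb‖ < δ → ∀ v ∈ limNormal2 Ω z,
    |inner2 v (z - zb)| ≤ ε * ‖z - zb‖ * ‖v‖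

/-- The regular subdifferential of an extended-real-valued function. -/
def regSubdiff (φ : E → EReal) (xb : E) : Set E :=
  {v | φ xb ≠ ⊤ ∧ φ xb ≠ ⊥ ∧ ∀ ε : ℝ, 0 < ε → ∃ δ > 0, ∀ x, ‖x - xb‖ < δ →
      φ xb + ((⟪v, x - xb⟫ - ε * ‖x - xb‖ : ℝ) : EReal) ≤ φ x}

/-- The limiting (Mordukhovich) subdifferential. -/
def limSubdiff (φ : E → EReal) (xb : E) : Set E :=
  {v | ∃ xk vk : ℕ → E, Tendsto xk atTop (𝓝 xb) ∧
      Tendsto (fun k => φ (xk k)) atTop (𝓝 (φ xb)) ∧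
      (∀ k, vk k ∈ regSubdiff φ (xk k)) ∧ Tendsto vk atTop (𝓝 v)}

/-- `φ` is prox-regular at `xb` for `vb` with parameters `r ≥ 0` and `ε > 0`. -/
def ProxRegular (φ : E → EReal) (xb vb : E) (r ε : ℝ) : Prop :=
  ∀ x' x v, ‖x' - xb‖ < ε → v ∈ limSubdiff φ x → ‖x - xb‖ < ε → ‖v - vb‖ < ε →
    φ x < φ xb + (ε : EReal) →
    φ x + ((⟪v, x' - x⟫ - r / 2 * ‖x' - x‖ ^ 2 : ℝ) : EReal) ≤ φ x'

/-- The graph of the `φ`-attentive `ε`-localization of `∂φ` around `(xb, vb)`. -/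
def attLocGraph (φ : E → EReal) (xb vb : E) (ε : ℝ) : Set (E × E) :=
  {p | p.2 ∈ limSubdiff φ p.1 ∧ ‖p.1 - xb‖ < ε ∧ ‖p.2 - vb‖ < ε ∧
      φ p.1 < φ xb + (ε : EReal)}

end InnerDefs

/-- The map `ℝⁿ → ℝᵈ × ℝᶜ` obtained from a permutation (re-indexing) of the
coordinates followed by splitting them into the first `d` and the last `c` ones. -/
def permSplit {n d c : ℕ} (e : Fin n ≃ (Fin d ⊕ Fin c)) (z : Euc n) : Euc d × Euc c :=
  (show Euc d from WithLp.toLp 2 (fun i => z (e.symm (Sum.inl i))),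
   show Euc c from WithLp.toLp 2 (fun j => z (e.symm (Sum.inr j))))
section Aux

variable {n m : ℕ}

lemma norm_le_of_inner_le {n : ℕ} {c : ℝ} (hc : 0 ≤ c) (a : Euc n)
    (h : ∀ u : Euc n, ⟪a, u⟫ ≤ c * ‖u‖) : ‖a‖ ≤ c := by
  rcases eq_or_lt_of_le (norm_nonneg a) with h0 | h0
  · rw [← h0]; exact hc
  · have := h a
    rw [real_inner_self_eq_norm_sq] at this
    nlinarith

lemma tan_subset_para {X : Type*} [NormedAddCommGroup X] [NormedSpace ℝ X]
    {Ω : Set X} {z : X} (hz : z ∈ Ω) : tanCone Ω z ⊆ paraCone Ω z := by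
  rintro w ⟨t, wk, h1, h2, h3, h4⟩
  exact ⟨fun _ => z, t, wk, fun _ => hz, tendsto_const_nhds, h1, h2, h3, h4⟩

/-- Existence of tangent vectors with controlled slope, under calmness on a ball. -/
lemma tan_exists {U : Set (Euc n)} {f : Euc n → Euc m} {x : Euc n}
    {κ r : ℝ} (hκ : 0 ≤ κ) (hr : 0 < r) (hball : Metric.ball x r ⊆ U)
    (hcalm : ∀ x' ∈ Metric.ball x r, ‖f x' - f x‖ ≤ κ * ‖x' - x‖) (u : Euc n) :
    ∃ w : Euc m, ‖w‖ ≤ κ * ‖u‖ ∧ (u, w) ∈ tanCone (gphOn f U) (x, f x) := by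
  set c : ℝ := r / (2 * (‖u‖ + 1)) with hc
  have hcpos : 0 < c := by positivity
  set t : ℕ → ℝ := fun k => c / (k + 1) with htdef
  have htpos : ∀ k, 0 < t k := fun k => by positivity
  have ht0 : Tendsto t atTop (𝓝 0) := by
    have he : t = fun k : ℕ => c * (1 / ((k : ℝ) + 1)) := by
      funext k; simp [htdef, div_eq_mul_inv]
    rw [he]
    simpa using tendsto_one_div_add_atTop_nhds_zero_nat.const_mul c
  have hmemball : ∀ k, x + t k • u ∈ Metric.ball x r := by
    intro k
    have h1 : t k ≤ c := by
      rw [htdef]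
      apply div_le_self hcpos.le
      have : (0 : ℝ) ≤ (k : ℝ) := Nat.cast_nonneg k
      linarith
    have h2 : t k * ‖u‖ < r := by
      have : c * ‖u‖ < c * (‖u‖ + 1) := by nlinarith
      have hcr : c * (‖u‖ + 1) = r / 2 := by
        rw [hc]; field_simp
      nlinarith [mul_le_mul_of_nonneg_right h1 (norm_nonneg u), (htpos k)]
    simp only [Metric.mem_ball, dist_eq_norm, add_sub_cancel_left, norm_smul,
      Real.norm_of_nonneg (htpos k).le]
    exact h2
  set wv : ℕ → Euc m := fun k => (t k)⁻¹ • (f (x + t k • u) - f x) with hwv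
  have hwbound : ∀ k, wv k ∈ Metric.closedBall (0 : Euc m) (κ * ‖u‖) := by
    intro k
    simp only [Metric.mem_closedBall, dist_zero_right, hwv, norm_smul,
      Real.norm_of_nonneg (inv_nonneg.mpr (htpos k).le)]
    have h1 := hcalm _ (hmemball k)
    rw [add_sub_cancel_left, norm_smul, Real.norm_of_nonneg (htpos k).le] at h1
    calc (t k)⁻¹ * ‖f (x + t k • u) - f x‖ ≤ (t k)⁻¹ * (κ * (t k * ‖u‖)) := by
          apply mul_le_mul_of_nonneg_left h1 (inv_nonneg.mpr (htpos k).le)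
      _ = κ * ‖u‖ := by rw [mul_left_comm, inv_mul_cancel_left₀ (htpos k).ne']
  obtain ⟨w, hwmem, φ, hφ, hwtend⟩ :=
    (isCompact_closedBall (0 : Euc m) (κ * ‖u‖)).tendsto_subseq hwbound
  refine ⟨w, by simpa [dist_eq_norm] using hwmem,
    t ∘ φ, fun k => (u, wv (φ k)), fun k => htpos _,
    ht0.comp hφ.tendsto_atTop, tendsto_const_nhds.prodMk_nhds hwtend, ?_⟩
  intro k
  constructor
  · show x + (t ∘ φ) k • u ∈ U
    exact hball (hmemball (φ k))
  · show f x + (t ∘ φ) k • wv (φ k) = f (x + (t ∘ φ) k • u)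
    simp only [hwv, Function.comp_apply, smul_smul,
      mul_inv_cancel₀ (htpos (φ k)).ne', one_smul]
    abel

/-- Slope bound for the paratingent cone under strict continuity. -/
lemma para_bound {U U' : Set (Euc n)} {f : Euc n → Euc m} {xb : Euc n} {κ : ℝ}
    (hU' : U' ∈ 𝓝 xb)
    (hlip : ∀ x ∈ U', ∀ x' ∈ U', ‖f x - f x'‖ ≤ κ * ‖x - x'‖) :
    ∀ p ∈ paraCone (gphOn f U) (xb, f xb), ‖p.2‖ ≤ κ * ‖p.1‖ := by
  rintro ⟨uu, vv⟩ ⟨zk, t, wk, hzmem, hztend, htpos, ht0, hwtend, hmem⟩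
  have hx : Tendsto (fun k => (zk k).1) atTop (𝓝 xb) :=
    (continuous_fst.tendsto _).comp hztend
  have hu : Tendsto (fun k => (wk k).1) atTop (𝓝 uu) :=
    (continuous_fst.tendsto _).comp hwtend
  have hv : Tendsto (fun k => (wk k).2) atTop (𝓝 vv) :=
    (continuous_snd.tendsto _).comp hwtend
  have hx2 : Tendsto (fun k => (zk k).1 + t k • (wk k).1) atTop (𝓝 xb) := by
    have hsm : Tendsto (fun k => t k • (wk k).1) atTop (𝓝 ((0 : ℝ) • uu)) := ht0.smul hu
    simpa using hx.add hsm
  have hev1 : ∀ᶠ k in atTop, (zk k).1 ∈ U' := hx.eventually_mem hU'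
  have hev2 : ∀ᶠ k in atTop, (zk k).1 + t k • (wk k).1 ∈ U' := hx2.eventually_mem hU'
  have hevle : ∀ᶠ k in atTop, ‖(wk k).2‖ ≤ κ * ‖(wk k).1‖ := by
    filter_upwards [hev1, hev2] with k h1 h2
    have hm := hmem k
    simp only [gphOn, Set.mem_setOf_eq, Prod.fst_add, Prod.snd_add,
      Prod.smul_fst, Prod.smul_snd] at hm
    have hz := hzmem k
    simp only [gphOn, Set.mem_setOf_eq] at hz
    have hfeq : t k • (wk k).2 = f ((zk k).1 + t k • (wk k).1) - f (zk k).1 := by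
      rw [← hm.2, hz.2]; abel
    have hn : t k * ‖(wk k).2‖ ≤ κ * (t k * ‖(wk k).1‖) := by
      calc t k * ‖(wk k).2‖ = ‖t k • (wk k).2‖ := by
            rw [norm_smul, Real.norm_of_nonneg (htpos k).le]
        _ = ‖f ((zk k).1 + t k • (wk k).1) - f (zk k).1‖ := by rw [hfeq]
        _ ≤ κ * ‖(zk k).1 + t k • (wk k).1 - (zk k).1‖ := hlip _ h2 _ h1
        _ = κ * (t k * ‖(wk k).1‖) := by
            rw [add_sub_cancel_left, norm_smul, Real.norm_of_nonneg (htpos k).le]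
    have := htpos k
    nlinarith
  exact le_of_tendsto_of_tendsto hv.norm (hu.norm.const_mul κ) hevle

/-- Slope bound for the tangent cone under calmness. -/
lemma tan_bound {U U' : Set (Euc n)} {f : Euc n → Euc m} {xb : Euc n} {κ : ℝ}
    (hU' : U' ∈ 𝓝 xb)
    (hcalm : ∀ x ∈ U', ‖f x - f xb‖ ≤ κ * ‖x - xb‖) :
    ∀ p ∈ tanCone (gphOn f U) (xb, f xb), ‖p.2‖ ≤ κ * ‖p.1‖ := by
  rintro ⟨uu, vv⟩ ⟨t, wk, htpos, ht0, hwtend, hmem⟩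
  have hu : Tendsto (fun k => (wk k).1) atTop (𝓝 uu) :=
    (continuous_fst.tendsto _).comp hwtend
  have hv : Tendsto (fun k => (wk k).2) atTop (𝓝 vv) :=
    (continuous_snd.tendsto _).comp hwtend
  have hx2 : Tendsto (fun k => xb + t k • (wk k).1) atTop (𝓝 xb) := by
    have hsm : Tendsto (fun k => t k • (wk k).1) atTop (𝓝 ((0 : ℝ) • uu)) := ht0.smul hu
    simpa using (tendsto_const_nhds (x := xb) (f := atTop)).add hsm
  have hev2 : ∀ᶠ k in atTop, xb + t k • (wk k).1 ∈ U' := hx2.eventually_mem hU'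
  have hevle : ∀ᶠ k in atTop, ‖(wk k).2‖ ≤ κ * ‖(wk k).1‖ := by
    filter_upwards [hev2] with k h2
    have hm := hmem k
    simp only [gphOn, Set.mem_setOf_eq, Prod.fst_add, Prod.snd_add,
      Prod.smul_fst, Prod.smul_snd] at hm
    have hfeq : t k • (wk k).2 = f (xb + t k • (wk k).1) - f xb := by
      rw [← hm.2]; abel
    have hn : t k * ‖(wk k).2‖ ≤ κ * (t k * ‖(wk k).1‖) := by
      calc t k * ‖(wk k).2‖ = ‖t k • (wk k).2‖ := by
            rw [norm_smul, Real.norm_of_nonneg (htpos k).le]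
        _ = ‖f (xb + t k • (wk k).1) - f xb‖ := by rw [hfeq]
        _ ≤ κ * ‖xb + t k • (wk k).1 - xb‖ := hcalm _ h2
        _ = κ * (t k * ‖(wk k).1‖) := by
            rw [add_sub_cancel_left, norm_smul, Real.norm_of_nonneg (htpos k).le]
    have := htpos k
    nlinarith
  exact le_of_tendsto_of_tendsto hv.norm (hu.norm.const_mul κ) hevle

/-- A linear subspace of a product which is the graph of a function is the graph
of a linear map, of dimension that of the source. -/
lemma graph_subspace (S : Submodule ℝ (Euc n × Euc m))
    (ha : ∀ p ∈ S, p.1 = 0 → p.2 = (0 : Euc m))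
    (hb : ∀ u : Euc n, ∃ v, (u, v) ∈ S) :
    Module.finrank ℝ S = n ∧
      ∃ A : Euc n →ₗ[ℝ] Euc m, (S : Set (Euc n × Euc m)) = {p | p.2 = A p.1} := by
  set L : S →ₗ[ℝ] Euc n := (LinearMap.fst ℝ (Euc n) (Euc m)).comp S.subtype with hL
  have hinj : Function.Injective L := by
    rw [← LinearMap.ker_eq_bot]
    ext x
    simp only [LinearMap.mem_ker, Submodule.mem_bot]
    constructor
    · intro hx
      have h1 : (x : Euc n × Euc m).1 = 0 := hx
      have h2 := ha x x.2 h1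
      ext1
      exact Prod.ext h1 h2
    · rintro rfl; rfl
  have hsurj : Function.Surjective L := by
    intro u
    obtain ⟨v, hv⟩ := hb u
    exact ⟨⟨(u, v), hv⟩, rfl⟩
  set e : S ≃ₗ[ℝ] Euc n := LinearEquiv.ofBijective L ⟨hinj, hsurj⟩ with he
  constructor
  · rw [e.finrank_eq, finrank_euclideanSpace_fin]
  · refine ⟨((LinearMap.snd ℝ (Euc n) (Euc m)).comp S.subtype).comp e.symm.toLinearMap, ?_⟩
    ext p
    simp only [Set.mem_setOf_eq, SetLike.mem_coe, LinearMap.coe_comp, Function.comp_apply,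
      LinearEquiv.coe_coe, LinearMap.snd_apply, Submodule.coe_subtype]
    constructor
    · intro hp
      have h1 : e ⟨p, hp⟩ = p.1 := rfl
      rw [← h1, e.symm_apply_apply]
    · intro hp
      have h1 : ((e.symm p.1 : S) : Euc n × Euc m).1 = p.1 := by
        have : e (e.symm p.1) = p.1 := e.apply_symm_apply p.1
        exact this
      have h2 : p = ((e.symm p.1 : S) : Euc n × Euc m) := Prod.ext h1.symm hp
      rw [h2]
      exact (e.symm p.1).2

/-- Bound on regular normals at a point of calmness. -/
lemma regNormal_bound {U : Set (Euc n)} {f : Euc n → Euc m} {x : Euc n} {κ r : ℝ}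
    (hκ : 0 ≤ κ) (hr : 0 < r) (hball : Metric.ball x r ⊆ U)
    (hcalm : ∀ x' ∈ Metric.ball x r, ‖f x' - f x‖ ≤ κ * ‖x' - x‖) :
    ∀ q ∈ regNormal2 (gphOn f U) (x, f x), ‖q.1‖ ≤ κ * ‖q.2‖ := by
  rintro ⟨a, b⟩ hq
  refine norm_le_of_inner_le (by positivity) a fun u => ?_
  obtain ⟨w, hwb, hwt⟩ := tan_exists hκ hr hball hcalm u
  have h := hq (u, w) hwt
  simp only [inner2] at h
  have h2 : ⟪a, u⟫ ≤ -⟪b, w⟫ := by linarith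
  calc ⟪a, u⟫ ≤ ‖b‖ * ‖w‖ := by
        have h3 : -⟪b, w⟫ ≤ |⟪b, w⟫| := neg_le_abs _
        have h4 := abs_real_inner_le_norm b w
        linarith
    _ ≤ ‖b‖ * (κ * ‖u‖) := mul_le_mul_of_nonneg_left hwb (norm_nonneg b)
    _ = κ * ‖b‖ * ‖u‖ := by ring

/-- Bound on limiting normals under local Lipschitz continuity. -/
lemma limNormal_bound {U : Set (Euc n)} {f : Euc n → Euc m} {xb : Euc n} {κ r : ℝ}
    (hκ : 0 ≤ κ) (hr : 0 < r) (hball : Metric.ball xb r ⊆ U)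
    (hlip : ∀ x ∈ Metric.ball xb r, ∀ x' ∈ Metric.ball xb r, ‖f x - f x'‖ ≤ κ * ‖x - x'‖) :
    ∀ q ∈ limNormal2 (gphOn f U) (xb, f xb), ‖q.1‖ ≤ κ * ‖q.2‖ := by
  rintro ⟨a, b⟩ ⟨zk, vk, hzmem, hztend, hreg, hvtend⟩
  have hx : Tendsto (fun k => (zk k).1) atTop (𝓝 xb) :=
    (continuous_fst.tendsto _).comp hztend
  have hv1 : Tendsto (fun k => (vk k).1) atTop (𝓝 a) :=
    (continuous_fst.tendsto _).comp hvtend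
  have hv2 : Tendsto (fun k => (vk k).2) atTop (𝓝 b) :=
    (continuous_snd.tendsto _).comp hvtend
  have hev : ∀ᶠ k in atTop, (zk k).1 ∈ Metric.ball xb (r / 2) :=
    hx.eventually_mem (Metric.ball_mem_nhds _ (by linarith))
  have hevle : ∀ᶠ k in atTop, ‖(vk k).1‖ ≤ κ * ‖(vk k).2‖ := by
    filter_upwards [hev] with k hk
    have hz := hzmem k
    simp only [gphOn, Set.mem_setOf_eq] at hz
    have hb2 : Metric.ball (zk k).1 (r / 2) ⊆ U := by
      refine subset_trans ?_ hball
      intro y hy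
      rw [Metric.mem_ball] at hy ⊢
      have := Metric.mem_ball.mp hk
      calc dist y xb ≤ dist y (zk k).1 + dist (zk k).1 xb := dist_triangle _ _ _
        _ < r / 2 + r / 2 := by linarith
        _ = r := by ring
    have hc2 : ∀ x' ∈ Metric.ball (zk k).1 (r / 2), ‖f x' - f (zk k).1‖ ≤ κ * ‖x' - (zk k).1‖ := by
      intro x' hx'
      refine hlip _ ?_ _ ?_
      · rw [Metric.mem_ball] at hx' ⊢
        have := Metric.mem_ball.mp hk
        calc dist x' xb ≤ dist x' (zk k).1 + dist (zk k).1 xb := dist_triangle _ _ _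
          _ < r / 2 + r / 2 := by linarith
          _ = r := by ring
      · exact Metric.ball_subset_ball (by linarith) hk
    have hzk : zk k = ((zk k).1, f (zk k).1) := Prod.ext rfl hz.2
    have := regNormal_bound hκ (by linarith : (0:ℝ) < r / 2) hb2 hc2 (vk k) (hzk ▸ hreg k)
    exact this
  exact le_of_tendsto_of_tendsto hv1.norm (hv2.norm.const_mul κ) hevle

/-- A penalized-minimum point yields a regular normal to the graph. -/
lemma regNormal2_of_min {U : Set (Euc n)} {f : Euc n → Euc m} {x0 xb : Euc n}
    {ρ δ : ℝ} (hδ : 0 < δ) (ys : Euc m) (hx0 : x0 ∈ Metric.ball xb ρ)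
    (hmin : ∀ x ∈ Metric.closedBall xb ρ,
      ⟪ys, f x0⟫ + ‖x0 - xb‖ ^ 2 / δ ≤ ⟪ys, f x⟫ + ‖x - xb‖ ^ 2 / δ) :
    ((2 / δ) • (xb - x0), -ys) ∈ regNormal2 (gphOn f U) (x0, f x0) := by
  rintro ⟨u, w⟩ ⟨t, wk, htpos, ht0, hwtend, hmem⟩
  have hu : Tendsto (fun k => (wk k).1) atTop (𝓝 u) :=
    (continuous_fst.tendsto _).comp hwtend
  have hv : Tendsto (fun k => (wk k).2) atTop (𝓝 w) :=
    (continuous_snd.tendsto _).comp hwtend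
  have hx2 : Tendsto (fun k => x0 + t k • (wk k).1) atTop (𝓝 x0) := by
    have hsm : Tendsto (fun k => t k • (wk k).1) atTop (𝓝 ((0 : ℝ) • u)) := ht0.smul hu
    simpa using (tendsto_const_nhds (x := x0) (f := atTop)).add hsm
  have hev : ∀ᶠ k in atTop, x0 + t k • (wk k).1 ∈ Metric.closedBall xb ρ :=
    hx2.eventually_mem (closedBall_mem_nhds_of_mem hx0)
  have key : ∀ᶠ k in atTop,
      0 ≤ δ * ⟪ys, (wk k).2⟫ + 2 * ⟪x0 - xb, (wk k).1⟫ + t k * ‖(wk k).1‖ ^ 2 := by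
    filter_upwards [hev] with k hk
    have hm := hmem k
    simp only [gphOn, Set.mem_setOf_eq, Prod.fst_add, Prod.snd_add,
      Prod.smul_fst, Prod.smul_snd] at hm
    have h := hmin _ hk
    rw [← hm.2] at h
    have hnorm : ‖x0 + t k • (wk k).1 - xb‖ ^ 2
        = ‖x0 - xb‖ ^ 2 + 2 * (t k * ⟪x0 - xb, (wk k).1⟫) + t k ^ 2 * ‖(wk k).1‖ ^ 2 := by
      have hre : x0 + t k • (wk k).1 - xb = (x0 - xb) + t k • (wk k).1 := by abel
      rw [hre, norm_add_sq_real, real_inner_smul_right, norm_smul,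
        Real.norm_of_nonneg (htpos k).le, mul_pow]
    have hip : ⟪ys, f x0 + t k • (wk k).2⟫ = ⟪ys, f x0⟫ + t k * ⟪ys, (wk k).2⟫ := by
      rw [inner_add_right, real_inner_smul_right]
    rw [hip, hnorm] at h
    set X : ℝ := ⟪ys, (wk k).2⟫ with hX
    set A : ℝ := ⟪x0 - xb, (wk k).1⟫ with hA
    set B : ℝ := ‖(wk k).1‖ ^ 2 with hB
    have ht := htpos k
    have hgrp : ‖x0 - xb‖ ^ 2 + 2 * (t k * A) + t k ^ 2 * B
        = ‖x0 - xb‖ ^ 2 + (2 * (t k * A) + t k ^ 2 * B) := by ring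
    rw [hgrp, add_div] at h
    have h5 : 0 ≤ t k * X + (2 * (t k * A) + t k ^ 2 * B) / δ := by linarith
    have h6 : (0 : ℝ) ≤ (t k * X + (2 * (t k * A) + t k ^ 2 * B) / δ) * δ :=
      mul_nonneg h5 hδ.le
    rw [add_mul, div_mul_cancel₀ _ hδ.ne'] at h6
    nlinarith
  have hlim : Tendsto (fun k => δ * ⟪ys, (wk k).2⟫ + 2 * ⟪x0 - xb, (wk k).1⟫
      + t k * ‖(wk k).1‖ ^ 2) atTop
      (𝓝 (δ * ⟪ys, w⟫ + 2 * ⟪x0 - xb, u⟫ + 0 * ‖u‖ ^ 2)) := by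
    exact (((tendsto_const_nhds.inner hv).const_mul δ).add
      ((tendsto_const_nhds.inner hu).const_mul 2)).add (ht0.mul (hu.norm.pow 2))
  have hfin : 0 ≤ δ * ⟪ys, w⟫ + 2 * ⟪x0 - xb, u⟫ := by
    have := ge_of_tendsto hlim key
    nlinarith
  show inner2 ((2 / δ) • (xb - x0), -ys) (u, w) ≤ 0
  simp only [inner2, real_inner_smul_left, inner_neg_left]
  have hs : ⟪xb - x0, u⟫ = -⟪x0 - xb, u⟫ := by rw [← inner_neg_left, neg_sub]
  rw [hs]
  have h2 : 2 / δ * -⟪x0 - xb, u⟫ + -⟪ys, w⟫ = -((2 * ⟪x0 - xb, u⟫ + δ * ⟪ys, w⟫) / δ) := by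
    field_simp
    ring
  rw [h2]
  have h3 : 0 ≤ (2 * ⟪x0 - xb, u⟫ + δ * ⟪ys, w⟫) / δ :=
    div_nonneg (by linarith) hδ.le
  linarith

/-- Nonemptiness of coderivative values for locally Lipschitz mappings. -/
lemma coderiv_surj {U : Set (Euc n)} {f : Euc n → Euc m} {xb : Euc n} {κ r : ℝ}
    (hκ : 0 ≤ κ) (hr : 0 < r) (hball : Metric.ball xb r ⊆ U)
    (hlip : ∀ x ∈ Metric.ball xb r, ∀ x' ∈ Metric.ball xb r, ‖f x - f x'‖ ≤ κ * ‖x - x'‖)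
    (ys : Euc m) :
    ∃ xs : Euc n, (xs, -ys) ∈ limNormal2 (gphOn f U) (xb, f xb) := by
  set ρ : ℝ := r / 2 with hρdef
  have hρ : 0 < ρ := by rw [hρdef]; linarith
  have hρr : ρ < r := by rw [hρdef]; linarith
  have hsubr : Metric.closedBall xb ρ ⊆ Metric.ball xb r := by
    intro y hy
    rw [Metric.mem_closedBall] at hy
    rw [Metric.mem_ball]
    linarith
  set d : ℝ := ρ / (κ * ‖ys‖ + 1) with hddef
  have hd : 0 < d := by positivity
  have hdbound : d * (κ * ‖ys‖) < ρ := by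
    rw [hddef]
    rw [div_mul_eq_mul_div, div_lt_iff₀ (by positivity)]
    nlinarith [mul_nonneg hκ (norm_nonneg ys)]
  have step : ∀ j : ℕ, ∃ x0 : Euc n, x0 ∈ Metric.ball xb ρ ∧
      ‖x0 - xb‖ ≤ d * (κ * ‖ys‖) * (1 / ((j : ℝ) + 1)) ∧
      ∃ v : Euc n, ‖v‖ ≤ 2 * (κ * ‖ys‖) ∧
        (v, -ys) ∈ regNormal2 (gphOn f U) (x0, f x0) := by
    intro j
    set δ : ℝ := d / ((j : ℝ) + 1) with hδdef
    have hδ : 0 < δ := by positivity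
    have hδd : δ ≤ d := by
      rw [hδdef]
      apply div_le_self hd.le
      have : (0 : ℝ) ≤ (j : ℝ) := Nat.cast_nonneg j
      linarith
    -- continuity of the penalized function
    have hcontf : ContinuousOn f (Metric.closedBall xb ρ) := by
      have hlw : LipschitzOnWith (Real.toNNReal κ) f (Metric.ball xb r) := by
        rw [lipschitzOnWith_iff_dist_le_mul]
        intro x hxm y hym
        rw [dist_eq_norm, dist_eq_norm, Real.coe_toNNReal κ hκ]
        exact hlip x hxm y hym
      exact (hlw.continuousOn).mono hsubr
    set g : Euc n → ℝ := fun x => ⟪ys, f x⟫ + ‖x - xb‖ ^ 2 / δ with hgdef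
    have hcontg : ContinuousOn g (Metric.closedBall xb ρ) := by
      apply ContinuousOn.add
      · exact continuousOn_const.inner hcontf
      · exact (((continuous_id.sub continuous_const).norm.pow 2).div_const δ).continuousOn
    obtain ⟨x0, hx0mem, hmin'⟩ := (isCompact_closedBall xb ρ).exists_isMinOn
      ⟨xb, Metric.mem_closedBall_self hρ.le⟩ hcontg
    have hmin : ∀ x ∈ Metric.closedBall xb ρ, g x0 ≤ g x := fun x hxm => hmin' hxm
    have hminxb := hmin xb (Metric.mem_closedBall_self hρ.le)
    have hgxb : g xb = ⟪ys, f xb⟫ := by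
      simp [hgdef]
    have hbase : ⟪ys, f x0⟫ + ‖x0 - xb‖ ^ 2 / δ ≤ ⟪ys, f xb⟫ := by
      rw [← hgxb]; exact hminxb
    have hipb : ⟪ys, f xb⟫ - ⟪ys, f x0⟫ ≤ κ * ‖ys‖ * ‖x0 - xb‖ := by
      have h1 : ⟪ys, f xb⟫ - ⟪ys, f x0⟫ = ⟪ys, f xb - f x0⟫ := by
        rw [inner_sub_right]
      rw [h1]
      calc ⟪ys, f xb - f x0⟫ ≤ |⟪ys, f xb - f x0⟫| := le_abs_self _
        _ ≤ ‖ys‖ * ‖f xb - f x0‖ := abs_real_inner_le_norm _ _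
        _ ≤ ‖ys‖ * (κ * ‖xb - x0‖) := by
            apply mul_le_mul_of_nonneg_left _ (norm_nonneg ys)
            exact hlip xb (Metric.mem_ball_self hr) x0 (hsubr hx0mem)
        _ = κ * ‖ys‖ * ‖x0 - xb‖ := by rw [norm_sub_rev]; ring
    have hx0b : ‖x0 - xb‖ ≤ δ * (κ * ‖ys‖) := by
      have h1 : ‖x0 - xb‖ ^ 2 / δ ≤ κ * ‖ys‖ * ‖x0 - xb‖ := by linarith
      have h2 : ‖x0 - xb‖ ^ 2 ≤ δ * (κ * ‖ys‖ * ‖x0 - xb‖) := by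
        rw [div_le_iff₀ hδ] at h1
        nlinarith
      rcases eq_or_lt_of_le (norm_nonneg (x0 - xb)) with h0 | h0
      · rw [← h0]; positivity
      · nlinarith
    have hx0ball : x0 ∈ Metric.ball xb ρ := by
      rw [Metric.mem_ball, dist_eq_norm]
      calc ‖x0 - xb‖ ≤ δ * (κ * ‖ys‖) := hx0b
        _ ≤ d * (κ * ‖ys‖) := by
            apply mul_le_mul_of_nonneg_right hδd (by positivity)
        _ < ρ := hdbound
    refine ⟨x0, hx0ball, ?_, (2 / δ) • (xb - x0), ?_, ?_⟩
    · calc ‖x0 - xb‖ ≤ δ * (κ * ‖ys‖) := hx0b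
        _ = d * (κ * ‖ys‖) * (1 / ((j : ℝ) + 1)) := by
            rw [hδdef]; field_simp
    · rw [norm_smul, Real.norm_of_nonneg (by positivity : (0:ℝ) ≤ 2 / δ), norm_sub_rev]
      calc 2 / δ * ‖x0 - xb‖ ≤ 2 / δ * (δ * (κ * ‖ys‖)) :=
            mul_le_mul_of_nonneg_left hx0b (by positivity)
        _ = 2 * (κ * ‖ys‖) := by field_simp
    · exact regNormal2_of_min hδ ys hx0ball fun x hxm => hmin x hxm
  choose x0 hx0ball hx0near v hvb hvreg using step
  have hx0tend : Tendsto x0 atTop (𝓝 xb) := by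
    rw [tendsto_iff_norm_sub_tendsto_zero]
    apply squeeze_zero (fun j => norm_nonneg _) hx0near
    simpa using tendsto_one_div_add_atTop_nhds_zero_nat.const_mul (d * (κ * ‖ys‖))
  have hfx0tend : Tendsto (fun j => f (x0 j)) atTop (𝓝 (f xb)) := by
    rw [tendsto_iff_norm_sub_tendsto_zero]
    have hbound : ∀ j : ℕ, ‖f (x0 j) - f xb‖ ≤ κ * (d * (κ * ‖ys‖)) * (1 / ((j : ℝ) + 1)) := by
      intro j
      calc ‖f (x0 j) - f xb‖ ≤ κ * ‖x0 j - xb‖ :=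
            hlip (x0 j) (Metric.ball_subset_ball hρr.le (hx0ball j)) xb (Metric.mem_ball_self hr)
        _ ≤ κ * (d * (κ * ‖ys‖) * (1 / ((j : ℝ) + 1))) :=
            mul_le_mul_of_nonneg_left (hx0near j) hκ
        _ = κ * (d * (κ * ‖ys‖)) * (1 / ((j : ℝ) + 1)) := by ring
    have htend : Tendsto (fun j : ℕ => κ * (d * (κ * ‖ys‖)) * (1 / ((j : ℝ) + 1))) atTop (𝓝 0) := by
      simpa using tendsto_one_div_add_atTop_nhds_zero_nat.const_mul (κ * (d * (κ * ‖ys‖)))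
    exact squeeze_zero (fun j => norm_nonneg _) hbound htend
  have hvmem : ∀ j, v j ∈ Metric.closedBall (0 : Euc n) (2 * (κ * ‖ys‖)) := by
    intro j
    rw [Metric.mem_closedBall, dist_zero_right]
    exact hvb j
  obtain ⟨xs, _, φ, hφ, hvtend⟩ :=
    (isCompact_closedBall (0 : Euc n) (2 * (κ * ‖ys‖))).tendsto_subseq hvmem
  refine ⟨xs, fun k => (x0 (φ k), f (x0 (φ k))), fun k => (v (φ k), -ys), ?_, ?_, ?_, ?_⟩
  · intro k
    exact ⟨hball (Metric.ball_subset_ball hρr.le (hx0ball (φ k))), rfl⟩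
  · exact (hx0tend.comp hφ.tendsto_atTop).prodMk_nhds (hfx0tend.comp hφ.tendsto_atTop)
  · intro k
    exact hvreg (φ k)
  · exact hvtend.prodMk_nhds tendsto_const_nhds

end Aux

/-- Lemma 2.7: dimension and single-valued linearity of the strict
derivative, limiting coderivative and graphical derivative of single-valued mappings. -/
theorem stmt_3 {n m : ℕ} (U : Set (Euc n)) (hU : IsOpen U) (f : Euc n → Euc m)
    (xb : Euc n) (hx : xb ∈ U) :
    (StrictlyContinuousAt' f U xb → IsLinearSubspace (paraCone (gphOn f U) (xb, f xb)) →
      HasDim (paraCone (gphOn f U) (xb, f xb)) n ∧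
      ∃ A : Euc n →ₗ[ℝ] Euc m,
        paraCone (gphOn f U) (xb, f xb) = {p : Euc n × Euc m | p.2 = A p.1}) ∧
    (StrictlyContinuousAt' f U xb → IsLinearSubspace (coderivGraph (gphOn f U) (xb, f xb)) →
      HasDim (coderivGraph (gphOn f U) (xb, f xb)) m ∧
      ∃ A : Euc m →ₗ[ℝ] Euc n,
        coderivGraph (gphOn f U) (xb, f xb) = {q : Euc m × Euc n | q.2 = A q.1}) ∧
    (CalmAt' f U xb → IsLinearSubspace (tanCone (gphOn f U) (xb, f xb)) →
      HasDim (tanCone (gphOn f U) (xb, f xb)) n ∧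
      ∃ A : Euc n →ₗ[ℝ] Euc m,
        tanCone (gphOn f U) (xb, f xb) = {p : Euc n × Euc m | p.2 = A p.1}) := by
  refine ⟨?_, ?_, ?_⟩
  · -- strict derivative
    rintro ⟨U', hU', hU'U, κ, hκ, hlip⟩ ⟨S, hS⟩
    obtain ⟨r, hr, hball⟩ := Metric.mem_nhds_iff.mp hU'
    have ha : ∀ p ∈ S, p.1 = 0 → p.2 = (0 : Euc m) := by
      intro p hp h1
      have hb := para_bound hU' hlip p (by rw [← hS]; exact hp)
      rw [h1, norm_zero, mul_zero] at hb
      exact norm_le_zero_iff.mp hb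
    have hb : ∀ u : Euc n, ∃ v, (u, v) ∈ S := by
      intro u
      have hcalm : ∀ x' ∈ Metric.ball xb r, ‖f x' - f xb‖ ≤ κ * ‖x' - xb‖ :=
        fun x' hx' => hlip x' (hball hx') xb (mem_of_mem_nhds hU')
      obtain ⟨w, _, hwt⟩ := tan_exists hκ hr (hball.trans hU'U) hcalm u
      refine ⟨w, ?_⟩
      rw [← SetLike.mem_coe, hS]
      exact tan_subset_para (show (xb, f xb) ∈ gphOn f U from ⟨hx, rfl⟩) hwt
    obtain ⟨hdim, A, hA⟩ := graph_subspace S ha hb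
    exact ⟨⟨S, hS, hdim⟩, A, by rw [← hS]; exact hA⟩
  · -- coderivative
    rintro ⟨U', hU', hU'U, κ, hκ, hlip⟩ ⟨S, hS⟩
    obtain ⟨r, hr, hball⟩ := Metric.mem_nhds_iff.mp hU'
    have hlip' : ∀ x ∈ Metric.ball xb r, ∀ x' ∈ Metric.ball xb r,
        ‖f x - f x'‖ ≤ κ * ‖x - x'‖ :=
      fun x hxm x' hxm' => hlip x (hball hxm) x' (hball hxm')
    have ha : ∀ q ∈ S, q.1 = 0 → q.2 = (0 : Euc n) := by
      intro q hq h1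
      have hq' : q ∈ coderivGraph (gphOn f U) (xb, f xb) := by rw [← hS]; exact hq
      have hb := limNormal_bound hκ hr (hball.trans hU'U) hlip' (q.2, -q.1) hq'
      rw [h1, neg_zero, norm_zero, mul_zero] at hb
      exact norm_le_zero_iff.mp hb
    have hb : ∀ ys : Euc m, ∃ xs, (ys, xs) ∈ S := by
      intro ys
      obtain ⟨xs, hxs⟩ := coderiv_surj hκ hr (hball.trans hU'U) hlip' ys
      refine ⟨xs, ?_⟩
      rw [← SetLike.mem_coe, hS]
      exact hxs
    obtain ⟨hdim, A, hA⟩ := graph_subspace S ha hb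
    exact ⟨⟨S, hS, hdim⟩, A, by rw [← hS]; exact hA⟩
  · -- graphical derivative
    rintro ⟨U', hU', hU'U, κ, hκ, hcalm⟩ ⟨S, hS⟩
    obtain ⟨r, hr, hball⟩ := Metric.mem_nhds_iff.mp hU'
    have ha : ∀ p ∈ S, p.1 = 0 → p.2 = (0 : Euc m) := by
      intro p hp h1
      have hb := tan_bound hU' hcalm p (by rw [← hS]; exact hp)
      rw [h1, norm_zero, mul_zero] at hb
      exact norm_le_zero_iff.mp hb
    have hb : ∀ u : Euc n, ∃ v, (u, v) ∈ S := by
      intro u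
      have hcalm' : ∀ x' ∈ Metric.ball xb r, ‖f x' - f xb‖ ≤ κ * ‖x' - xb‖ :=
        fun x' hx' => hcalm x' (hball hx')
      obtain ⟨w, _, hwt⟩ := tan_exists hκ hr (hball.trans hU'U) hcalm' u
      refine ⟨w, ?_⟩
      rw [← SetLike.mem_coe, hS]
      exact hwt
    obtain ⟨hdim, A, hA⟩ := graph_subspace S ha hb
    exact ⟨⟨S, hS, hdim⟩, A, by rw [← hS]; exact hA⟩
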